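/- For every real ξ > 0, every positive integer h, every real β, and every complex number ρ with |ρ| = 1: ∑_{r=0}^{2^h−1} exp(ξ·Re(ρ·T_h((β+r)/2^h))) ≤ ∑_{r=0}^{2^h−1} exp(ξ·Re(T_h(r/2^h))). -/

import Mathlib

/-- `e x = exp(2πix)`. -/
noncomputable def e (x : ℝ) : ℂ := Complex.exp (2 * Real.pi * Complex.I * x)

/-- `T_h(α) = ∑_{0 ≤ n ≤ h-1} e(α·2^n)`. -/
noncomputable def Th (h : ℕ) (α : ℝ) : ℂ := ∑ n ∈ Finset.range h, e (α * 2 ^ n)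

open Finset Complex Nat

lemma e_add (x y : ℝ) : e (x + y) = e x * e y := by
  simp only [e, ← Complex.exp_add]; congr 1; push_cast; ring

lemma e_zero : e 0 = 1 := by simp [e]

lemma e_abs (x : ℝ) : ‖e x‖ = 1 := by
  simp [e, Complex.norm_exp]

lemma conj_e (x : ℝ) : (starRingEnd ℂ) (e x) = e (-x) := by
  rw [e, e, ← Complex.exp_conj]
  congr 1
  simp only [map_mul, Complex.conj_I, Complex.conj_ofReal, map_ofNat]
  push_cast
  ring

lemma e_sum {ι : Type*} (s : Finset ι) (f : ι → ℝ) :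
    e (∑ i ∈ s, f i) = ∏ i ∈ s, e (f i) := by
  simp only [e]
  rw [← Complex.exp_sum]
  congr 1
  push_cast
  rw [Finset.mul_sum]

lemma e_nat_mul (n : ℕ) (x : ℝ) : e (n * x) = e x ^ n := by
  induction n with
  | zero => simp [e_zero]
  | succ k ih => push_cast; rw [add_mul, one_mul, e_add, ih, pow_succ]

lemma e_int (n : ℤ) : e n = 1 := by
  rw [e]
  have : (2 * (Real.pi:ℂ) * Complex.I * (n:ℝ)) = n * (2 * Real.pi * Complex.I) := by
    push_cast; ring
  rw [this, Complex.exp_int_mul_two_pi_mul_I]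

lemma sum_e_geom (h : ℕ) (K : ℤ) :
    ∑ r ∈ Finset.range (2 ^ h), e (r * ((K : ℝ) / 2 ^ h)) =
      if (2:ℤ) ^ h ∣ K then ((2:ℂ) ^ h) else 0 := by
  have hN : ((2:ℝ) ^ h) ≠ 0 := by positivity
  simp only [e_nat_mul]
  by_cases hd : (2:ℤ) ^ h ∣ K
  · obtain ⟨m, rfl⟩ := hd
    have hm : ((2 ^ h * m : ℤ) : ℝ) / 2 ^ h = (m : ℝ) := by
      push_cast; field_simp
    rw [hm, e_int, if_pos ⟨m, rfl⟩]
    simp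
  · have hζ : e ((K : ℝ) / 2 ^ h) ≠ 1 := by
      intro hc
      rw [e, Complex.exp_eq_one_iff] at hc
      obtain ⟨n, hn⟩ := hc
      have h2 : (2 * (Real.pi : ℂ) * Complex.I) ≠ 0 := by
        simp [Real.pi_ne_zero, Complex.I_ne_zero]
      have hx : (((K : ℝ) / 2 ^ h : ℝ) : ℂ) = (n : ℂ) := by
        have := hn
        rw [mul_comm ((n:ℂ)) (2 * (Real.pi:ℂ) * Complex.I)] at this
        exact mul_left_cancel₀ h2 this
      have hx' : (K : ℝ) / 2 ^ h = (n : ℝ) := by exact_mod_cast hx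
      have hK : (K : ℝ) = (n : ℝ) * 2 ^ h := by
        field_simp at hx'; linarith [hx']
      have : K = n * 2 ^ h := by exact_mod_cast hK
      exact hd ⟨n, by linarith [this]⟩
    rw [geom_sum_eq hζ, if_neg hd]
    have hpow : e ((K : ℝ) / 2 ^ h) ^ (2 ^ h) = 1 := by
      rw [← e_nat_mul]
      have : ((2 ^ h : ℕ) : ℝ) * ((K : ℝ) / 2 ^ h) = ((K : ℤ) : ℝ) := by
        push_cast; field_simp
      rw [this, e_int]
    rw [hpow]
    simp

noncomputable def cf (ρ : ℂ) (z : ℕ × Bool) : ℂ := if z.2 then ρ else (starRingEnd ℂ) ρ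

noncomputable def gz (ρ : ℂ) (α : ℝ) (z : ℕ × Bool) : ℂ :=
  cf ρ z * e ((if z.2 then (1:ℝ) else -1) * (α * 2 ^ z.1)) / 2

def Kp (j : ℕ) (p : Fin j → ℕ × Bool) : ℤ :=
  ∑ i, (if (p i).2 then (1:ℤ) else -1) * 2 ^ (p i).1

lemma re_eq_sum (h : ℕ) (ρ : ℂ) (α : ℝ) :
    (((ρ * Th h α).re : ℝ) : ℂ) =
      ∑ z ∈ Finset.range h ×ˢ (Finset.univ : Finset Bool), gz ρ α z := by
  have h1 : ((((ρ * Th h α).re : ℝ)) : ℂ) =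
      (ρ * Th h α + (starRingEnd ℂ) (ρ * Th h α)) / 2 := by
    rw [Complex.add_conj]
    push_cast
    ring
  rw [h1, Finset.sum_product]
  simp only [Th, map_mul, map_sum, conj_e, Finset.mul_sum, ← Finset.sum_add_distrib,
    ← Finset.sum_div]
  rw [Finset.sum_div]
  refine Finset.sum_congr rfl fun n _ => ?_
  rw [Fintype.sum_bool]
  simp only [gz, cf]
  norm_num
  ring

lemma prod_gz (j : ℕ) (ρ : ℂ) (α : ℝ) (p : Fin j → ℕ × Bool) :
    ∏ i, gz ρ α (p i) = (1/2 : ℂ) ^ j * (∏ i, cf ρ (p i)) * e (α * (Kp j p : ℝ)) := by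
  have hsum : ∑ i, (if (p i).2 then (1:ℝ) else -1) * (α * 2 ^ (p i).1)
      = α * (Kp j p : ℝ) := by
    unfold Kp
    push_cast
    rw [Finset.mul_sum]
    refine Finset.sum_congr rfl fun i _ => ?_
    split_ifs <;> push_cast <;> ring
  rw [← hsum, e_sum]
  simp only [gz, div_eq_mul_inv, Finset.prod_mul_distrib, Finset.prod_const, Finset.card_univ,
    Fintype.card_fin]
  ring

lemma moment_formula (h j : ℕ) (β : ℝ) (ρ : ℂ) :
    ∑ r ∈ Finset.range (2 ^ h), (((ρ * Th h ((β + r) / 2 ^ h)).re : ℝ) : ℂ) ^ j =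
      ∑ p ∈ Fintype.piFinset (fun _ : Fin j => Finset.range h ×ˢ (Finset.univ : Finset Bool)),
        (1/2 : ℂ) ^ j * (∏ i, cf ρ (p i)) * e (β * (Kp j p : ℝ) / 2 ^ h) *
          (if (2:ℤ) ^ h ∣ Kp j p then ((2:ℂ) ^ h) else 0) := by
  have step1 : ∀ r : ℕ, (((ρ * Th h ((β + r) / 2 ^ h)).re : ℝ) : ℂ) ^ j
      = ∑ p ∈ Fintype.piFinset (fun _ : Fin j => Finset.range h ×ˢ (Finset.univ : Finset Bool)),
          ∏ i, gz ρ ((β + r) / 2 ^ h) (p i) := by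
    intro r
    rw [re_eq_sum, Finset.sum_pow']
  simp only [step1]
  rw [Finset.sum_comm]
  refine Finset.sum_congr rfl fun p _ => ?_
  have hr : ∀ r : ℕ, ∏ i, gz ρ ((β + r) / 2 ^ h) (p i)
      = ((1/2 : ℂ) ^ j * (∏ i, cf ρ (p i)) * e (β * (Kp j p : ℝ) / 2 ^ h)) *
          e (r * ((Kp j p : ℝ) / 2 ^ h)) := by
    intro r
    rw [prod_gz]
    have harg : (β + r) / 2 ^ h * (Kp j p : ℝ)
        = β * (Kp j p : ℝ) / 2 ^ h + r * ((Kp j p : ℝ) / 2 ^ h) := by ring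
    rw [harg, e_add]
    ring
  simp only [hr, ← Finset.mul_sum, sum_e_geom]

lemma moment_le (h j : ℕ) (β : ℝ) (ρ : ℂ) (hρ : ‖ρ‖ = 1) :
    ∑ r ∈ Finset.range (2 ^ h), ((ρ * Th h ((β + r) / 2 ^ h)).re) ^ j ≤
      ∑ r ∈ Finset.range (2 ^ h), (((1:ℂ) * Th h (((0:ℝ) + r) / 2 ^ h)).re) ^ j := by
  have cast1 : ∀ (β : ℝ) (ρ : ℂ),
      ∑ r ∈ Finset.range (2 ^ h), ((ρ * Th h ((β + r) / 2 ^ h)).re) ^ j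
      = (∑ r ∈ Finset.range (2 ^ h), (((ρ * Th h ((β + r) / 2 ^ h)).re : ℝ) : ℂ) ^ j).re := by
    intro β ρ
    rw [Complex.re_sum]
    refine Finset.sum_congr rfl fun r _ => ?_
    rw [← Complex.ofReal_pow, Complex.ofReal_re]
  rw [cast1 β ρ, cast1 0 1, moment_formula, moment_formula, Complex.re_sum, Complex.re_sum]
  refine Finset.sum_le_sum fun p _ => ?_
  set δ : ℝ := if (2:ℤ) ^ h ∣ Kp j p then ((2:ℝ) ^ h) else 0 with hδ
  have hδ0 : 0 ≤ δ := by rw [hδ]; split_ifs <;> norm_num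
  have hcast : (if (2:ℤ) ^ h ∣ Kp j p then ((2:ℂ) ^ h) else 0) = ((δ : ℝ) : ℂ) := by
    rw [hδ]; split_ifs <;> push_cast <;> rfl
  have hRHS : ((1/2 : ℂ) ^ j * (∏ i, cf 1 (p i)) * e (0 * (Kp j p : ℝ) / 2 ^ h) *
      (if (2:ℤ) ^ h ∣ Kp j p then ((2:ℂ) ^ h) else 0)).re = (1/2:ℝ) ^ j * δ := by
    have h1 : ∏ i, cf (1:ℂ) (p i) = 1 :=
      Finset.prod_eq_one fun i _ => by simp [cf]
    rw [h1, zero_mul, zero_div, e_zero, hcast, mul_one, mul_one]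
    rw [show ((1/2 : ℂ)) = (((1/2 : ℝ)) : ℂ) by push_cast; rfl]
    rw [← Complex.ofReal_pow, ← Complex.ofReal_mul, Complex.ofReal_re]
  rw [hRHS]
  calc ((1/2 : ℂ) ^ j * (∏ i, cf ρ (p i)) * e (β * (Kp j p : ℝ) / 2 ^ h) *
      (if (2:ℤ) ^ h ∣ Kp j p then ((2:ℂ) ^ h) else 0)).re
      ≤ ‖((1/2 : ℂ) ^ j * (∏ i, cf ρ (p i)) * e (β * (Kp j p : ℝ) / 2 ^ h) *
        (if (2:ℤ) ^ h ∣ Kp j p then ((2:ℂ) ^ h) else 0))‖ := Complex.re_le_norm _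
    _ = (1/2:ℝ) ^ j * δ := by
        rw [hcast]
        rw [norm_mul, norm_mul, norm_mul, norm_pow, norm_prod]
        have hcf : ∀ i : Fin j, ‖cf ρ (p i)‖ = 1 := by
          intro i; rw [cf]; split_ifs <;> simp [Complex.norm_conj, hρ]
        simp only [hcf, Finset.prod_const_one, e_abs, Complex.norm_real, Real.norm_eq_abs]
        rw [_root_.abs_of_nonneg hδ0]
        norm_num

lemma real_exp_tsum (y : ℝ) : Real.exp y = ∑' n : ℕ, y ^ n / n ! := by
  rw [Real.exp_eq_exp_ℝ, NormedSpace.exp_eq_tsum_div]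

lemma exp_sum_le_of_moments {s : Finset ℕ} (ξ : ℝ) (hξ : 0 < ξ) (u v : ℕ → ℝ)
    (hm : ∀ j : ℕ, ∑ r ∈ s, (u r) ^ j ≤ ∑ r ∈ s, (v r) ^ j) :
    ∑ r ∈ s, Real.exp (ξ * u r) ≤ ∑ r ∈ s, Real.exp (ξ * v r) := by
  have hsumm : ∀ w : ℕ → ℝ, ∀ r : ℕ, Summable (fun j : ℕ => (ξ * w r) ^ j / j !) :=
    fun w r => Real.summable_pow_div_factorial _
  have hswap : ∀ w : ℕ → ℝ,
      ∑ r ∈ s, Real.exp (ξ * w r) = ∑' j : ℕ, ∑ r ∈ s, (ξ * w r) ^ j / j ! := by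
    intro w
    simp only [real_exp_tsum]
    exact (Summable.tsum_finsetSum fun r _ => hsumm w r).symm
  rw [hswap u, hswap v]
  have hterm : ∀ j : ℕ, ∑ r ∈ s, (ξ * u r) ^ j / j ! ≤ ∑ r ∈ s, (ξ * v r) ^ j / j ! := by
    intro j
    have hrw : ∀ w : ℕ → ℝ,
        ∑ r ∈ s, (ξ * w r) ^ j / j ! = (ξ ^ j / j !) * ∑ r ∈ s, (w r) ^ j := by
      intro w
      rw [Finset.mul_sum]
      refine Finset.sum_congr rfl fun r _ => ?_
      rw [mul_pow]; ring
    rw [hrw u, hrw v]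
    exact mul_le_mul_of_nonneg_left (hm j) (by positivity)
  exact Summable.tsum_le_tsum hterm (summable_sum fun r _ => hsumm u r)
    (summable_sum fun r _ => hsumm v r)

/-- The supremum in (43) of the paper occurs at `β = 0`, `ρ = 1`:
`∑_{r<2^h} exp(ξ·Re(ρ T_h((β+r)/2^h))) ≤ ∑_{r<2^h} exp(ξ·Re(T_h(r/2^h)))`. -/
theorem exp_sum_sup_at_zero (ξ : ℝ) (hξ : 0 < ξ) (h : ℕ) (hh : 0 < h) (β : ℝ) (ρ : ℂ)
    (hρ : ‖ρ‖ = 1) :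
    ∑ r ∈ Finset.range (2 ^ h), Real.exp (ξ * (ρ * Th h ((β + r) / 2 ^ h)).re) ≤
      ∑ r ∈ Finset.range (2 ^ h), Real.exp (ξ * (Th h (r / 2 ^ h)).re) := by
  have key := exp_sum_le_of_moments (s := Finset.range (2 ^ h)) ξ hξ
    (fun r => (ρ * Th h ((β + r) / 2 ^ h)).re)
    (fun r => (((1:ℂ) * Th h (((0:ℝ) + r) / 2 ^ h)).re))
    (fun j => moment_le h j β ρ hρ)
  refine le_trans key (le_of_eq ?_)
  refine Finset.sum_congr rfl fun r _ => ?_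
  norm_num
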